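/- arXiv:2410.08832 — 6 statements merged into one kernel-verified Lean document; each statement's English description precedes it below -/
import Mathlib

section
/- Let λ = (1+√5)/2 and λ̄ = −1/λ. For n ≥ 1 and any exponents α₀,…,α_{n−4} ∈ {0,1}, the quantity λ̄ⁿ − Σ_{i=0}^{n−4} αᵢ λ̄ⁱ lies strictly between −λ and 1. -/
/-!
Write `S = ∑ αᵢ λ̄ⁱ`. Peeling off the constant term gives `S(α) = α₀ + λ̄ S(α ∘ succ)`, and since
`λ̄ < 0` this swaps lower and upper bounds, so both are proved together by induction; the golden
relation `1 - λ̄² = |λ̄|` makes them `-1 + |λ̄|ᵐ ≤ S ≤ λ - |λ̄|ᵐ` for sums of length `m`. The leading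
term satisfies `|λ̄ⁿ| = |λ̄|ⁿ < |λ̄|ᵐ` because `m < n`, which gives both strict inequalities.
-/

noncomputable def lam : ℝ := (1 + Real.sqrt 5) / 2
noncomputable def lamBar : ℝ := -1 / lam

open Finset

theorem sum_range_mul_pow_bounds_of_nonpos {r : ℝ} (hr₀ : r ≤ 0) (hr₁ : -1 ≤ r)
    {α : ℕ → ℝ} (hα : ∀ i, 0 ≤ α i ∧ α i ≤ 1) (m : ℕ) :
    r * (1 - (-r) ^ m) ≤ (1 - r ^ 2) * ∑ i ∈ range m, α i * r ^ i ∧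
      (1 - r ^ 2) * ∑ i ∈ range m, α i * r ^ i ≤ 1 - (-r) ^ (m + 1) := by
  induction m generalizing α with
  | zero => simp; linarith
  | succ m ih =>
    obtain ⟨hlo, hup⟩ := ih (α := fun i ↦ α (i + 1)) fun i ↦ hα (i + 1)
    set S := ∑ i ∈ range m, α (i + 1) * r ^ i
    have hpeel : ∑ i ∈ range (m + 1), α i * r ^ i = α 0 + r * S := by
      rw [sum_range_succ', mul_sum, pow_zero, mul_one, add_comm]
      exact congrArg _ (sum_congr rfl fun i _ ↦ by ring)
    have hsq : 0 ≤ 1 - r ^ 2 := by nlinarith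
    obtain ⟨ha₀, ha₁⟩ := hα 0
    have hfirst₀ : 0 ≤ (1 - r ^ 2) * α 0 := mul_nonneg hsq ha₀
    have hfirst₁ : (1 - r ^ 2) * α 0 ≤ 1 - r ^ 2 := mul_le_of_le_one_right hsq ha₁
    have hrest₀ := mul_le_mul_of_nonpos_left hup hr₀
    have hrest₁ := mul_le_mul_of_nonpos_left hlo hr₀
    rw [hpeel,
      show (1 - r ^ 2) * (α 0 + r * S) = (1 - r ^ 2) * α 0 + r * ((1 - r ^ 2) * S) by ring]
    constructor
    · linarith
    · have : r * (r * (1 - (-r) ^ m)) = r ^ 2 - (-r) ^ (m + 2) := by ring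
      linarith

theorem lam_sq : lam ^ 2 = lam + 1 := by
  have h5 : Real.sqrt 5 ^ 2 = 5 := Real.sq_sqrt (by norm_num)
  unfold lam
  linear_combination h5 / 4

theorem one_lt_lam : 1 < lam := by
  have : 1 < Real.sqrt 5 := by rw [Real.lt_sqrt zero_le_one]; norm_num
  unfold lam
  linarith

theorem lam_lt_two : lam < 2 := by
  have : Real.sqrt 5 < 3 := by rw [Real.sqrt_lt' three_pos]; norm_num
  unfold lam
  linarith

theorem lamBar_eq_one_sub_lam : lamBar = 1 - lam := by
  have := one_lt_lam
  unfold lamBar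
  field_simp
  linear_combination lam_sq

theorem lamBar_neg : lamBar < 0 := by
  linarith [lamBar_eq_one_sub_lam, one_lt_lam]

theorem neg_one_lt_lamBar : -1 < lamBar := by
  linarith [lamBar_eq_one_sub_lam, lam_lt_two]

theorem abs_lamBar_lt_one : |lamBar| < 1 :=
  abs_lt.mpr ⟨neg_one_lt_lamBar, lamBar_neg.trans one_pos⟩

theorem one_sub_lamBar_sq : 1 - lamBar ^ 2 = |lamBar| := by
  rw [abs_of_neg lamBar_neg, lamBar_eq_one_sub_lam]
  linear_combination -lam_sq

theorem lam_mul_abs_lamBar : lam * |lamBar| = 1 := by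
  rw [abs_of_neg lamBar_neg, lamBar_eq_one_sub_lam]
  linear_combination lam_sq

theorem sum_range_mul_lamBar_pow_bounds {α : ℕ → ℝ} (hα : ∀ i, 0 ≤ α i ∧ α i ≤ 1) (m : ℕ) :
    -1 + |lamBar| ^ m ≤ ∑ i ∈ range m, α i * lamBar ^ i ∧
      ∑ i ∈ range m, α i * lamBar ^ i ≤ lam - |lamBar| ^ m := by
  obtain ⟨hlo, hup⟩ :=
    sum_range_mul_pow_bounds_of_nonpos lamBar_neg.le neg_one_lt_lamBar.le hα m
  rw [one_sub_lamBar_sq, ← abs_of_neg lamBar_neg] at hlo hup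
  set S := ∑ i ∈ range m, α i * lamBar ^ i
  have hbar : lamBar = -|lamBar| := by rw [abs_of_neg lamBar_neg, neg_neg]
  constructor
  · refine le_of_mul_le_mul_left ?_ (abs_pos.mpr lamBar_neg.ne)
    calc |lamBar| * (-1 + |lamBar| ^ m) = lamBar * (1 - |lamBar| ^ m) := by
          linear_combination (|lamBar| ^ m - 1) * hbar
      _ ≤ |lamBar| * S := hlo
  · calc S = lam * (|lamBar| * S) := by rw [← mul_assoc, lam_mul_abs_lamBar, one_mul]
      _ ≤ lam * (1 - |lamBar| ^ (m + 1)) :=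
        mul_le_mul_of_nonneg_left hup (zero_le_one.trans one_lt_lam.le)
      _ = lam - |lamBar| ^ m := by
        rw [pow_succ']
        linear_combination (-|lamBar| ^ m) * lam_mul_abs_lamBar

/-- The superweight `λ̄ⁿ − Σ_{i=0}^{n−4} αᵢ λ̄ⁱ` of a standard monomial
`t₀^{α₀}⋯t_{n−4}^{α_{n−4}} v_n` lies strictly between `−λ` and `1`. -/
theorem superweight_bounds_standard_monomial (n : ℕ) (hn : 1 ≤ n)
    (α : ℕ → ℝ) (hα : ∀ i, α i = 0 ∨ α i = 1) :
    -lam < lamBar ^ n - ∑ i ∈ Finset.range (n - 3), α i * lamBar ^ i ∧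
    lamBar ^ n - ∑ i ∈ Finset.range (n - 3), α i * lamBar ^ i < 1 := by
  have hα' : ∀ i, 0 ≤ α i ∧ α i ≤ 1 := fun i ↦ by rcases hα i with h | h <;> simp [h]
  obtain ⟨hlo, hup⟩ := sum_range_mul_lamBar_pow_bounds hα' (n - 3)
  have hlead : |lamBar ^ n| < |lamBar| ^ (n - 3) := by
    rw [abs_pow]
    exact pow_lt_pow_right_of_lt_one₀ (abs_pos.mpr lamBar_neg.ne) abs_lamBar_lt_one (by omega)
  obtain ⟨hlead₀, hlead₁⟩ := abs_lt.mp hlead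
  constructor <;> linarith
end

section
/- Let λ = (1+√5)/2, λ̄ = −1/λ. For n ≥ 4 and any exponents α₁,…,α_{n−4} ∈ {0,1}, the quantity λ̄ⁿ − λ̄⁰ − Σ_{i=1}^{n−4} αᵢ λ̄ⁱ lies strictly between −λ and 0. -/
/-!
Write `ψ = λ̄`, `m = n - 4` and `T = Σ_{i=1}^{m} αᵢ ψⁱ`. As `αᵢ ∈ [0, 1]`, `T` lies within
`½ Σ |ψ|ⁱ = ½ φ (1 - |ψ|ᵐ)` of `½ Σ ψⁱ = ½ (ψ^(m+2) - ψ²)`, and the claim asks for `T` within `½ φ`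
of `ψ^(m+4) - ½ (1 + ψ)`. Since `ψ² = ψ + 1`, the two centres differ by
`½ (ψ^(m+2) - 2 ψ^(m+4)) = ½ ψᵐ (ψ² - 2 ψ⁴)`, and `|ψ² - 2 ψ⁴| < 1 < φ`, so this is less than the
slack `½ φ |ψ|ᵐ`.
-/

open Finset Real goldenRatio

lemma abs_sum_mul_sub_half_sum_le {ι : Type*} (s : Finset ι) (α x : ι → ℝ)
    (hα : ∀ i ∈ s, α i ∈ Set.Icc 0 1) :
    |∑ i ∈ s, α i * x i - (∑ i ∈ s, x i) / 2| ≤ (∑ i ∈ s, |x i|) / 2 := by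
  have hcoeff : ∀ i ∈ s, |α i - 1 / 2| * |x i| ≤ |x i| / 2 := fun i hi => by
    have : |α i - 1 / 2| ≤ 1 / 2 := abs_le.2 ⟨by linarith [(hα i hi).1], by linarith [(hα i hi).2]⟩
    nlinarith [abs_nonneg (x i)]
  calc |∑ i ∈ s, α i * x i - (∑ i ∈ s, x i) / 2|
      = |∑ i ∈ s, (α i - 1 / 2) * x i| := by
        rw [sum_div, ← sum_sub_distrib]; exact congrArg abs (sum_congr rfl fun _ _ => by ring)
    _ ≤ ∑ i ∈ s, |α i - 1 / 2| * |x i| := by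
        simpa only [abs_mul] using abs_sum_le_sum_abs (fun i => (α i - 1 / 2) * x i) s
    _ ≤ ∑ i ∈ s, |x i| / 2 := sum_le_sum hcoeff
    _ = (∑ i ∈ s, |x i|) / 2 := (sum_div ..).symm

lemma sum_Icc_pow_eq_of_sq_eq_add_one {R : Type*} [CommRing R] {x : R} (hx : x ^ 2 = x + 1)
    (m : ℕ) : ∑ i ∈ Icc 1 m, x ^ i = x ^ (m + 2) - x ^ 2 := by
  induction m with
  | zero => simp
  | succ m ih =>
    rw [sum_Icc_succ_top (by omega), ih]
    linear_combination (-x ^ (m + 1)) * hx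

lemma sum_Icc_pow_eq_of_sq_add_self_eq_one {R : Type*} [CommRing R] {x : R} (hx : x ^ 2 + x = 1)
    (m : ℕ) : ∑ i ∈ Icc 1 m, x ^ i = (1 + x) * (1 - x ^ m) := by
  induction m with
  | zero => simp
  | succ m ih =>
    rw [sum_Icc_succ_top (by omega), ih]
    linear_combination x ^ m * hx

lemma abs_goldenConj_pow_sub_two_mul_lt (m : ℕ) :
    |ψ ^ (m + 2) - 2 * ψ ^ (m + 4)| < φ * |ψ| ^ m := by
  have hsmall : |ψ ^ 2 - 2 * ψ ^ 4| < φ := by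
    have h4 : ψ ^ 4 = 3 * ψ + 2 := by
      rw [show ψ ^ 4 = (ψ ^ 2) ^ 2 by ring, goldenConj_sq]; linear_combination goldenConj_sq
    rw [abs_lt, h4, goldenConj_sq, ← one_sub_goldenRatio]
    constructor <;> nlinarith [goldenConj_neg, neg_one_lt_goldenConj, goldenConj_sq]
  calc |ψ ^ (m + 2) - 2 * ψ ^ (m + 4)| = |ψ| ^ m * |ψ ^ 2 - 2 * ψ ^ 4| := by
        rw [← abs_pow, ← abs_mul]; ring_nf
    _ < |ψ| ^ m * φ := mul_lt_mul_of_pos_left hsmall (pow_pos (abs_pos.2 goldenConj_ne_zero) m)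
    _ = φ * |ψ| ^ m := mul_comm ..

/-- The superweight `λ̄ⁿ − λ̄⁰ − Σ_{i=1}^{n−4} αᵢ λ̄ⁱ` of a standard monomial
`t₀ t₁^{α₁}⋯t_{n−4}^{α_{n−4}} v_n` of the abelian ideal lies strictly between `−λ` and `0`. -/
theorem superweight_bounds_abelian_ideal (n : ℕ) (hn : 4 ≤ n)
    (α : ℕ → ℝ) (hα : ∀ i, α i = 0 ∨ α i = 1) :
    -lam < lamBar ^ n - 1 - ∑ i ∈ Finset.Icc 1 (n - 4), α i * lamBar ^ i ∧
    lamBar ^ n - 1 - ∑ i ∈ Finset.Icc 1 (n - 4), α i * lamBar ^ i < 0 := by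
  obtain ⟨m, rfl⟩ : ∃ m, n = m + 4 := ⟨n - 4, by omega⟩
  have hlam : lam = φ := rfl
  have hlamBar : lamBar = ψ := by rw [lamBar, hlam, neg_div, one_div, inv_goldenRatio, neg_neg]
  have hunit : ∀ i ∈ Icc 1 m, α i ∈ Set.Icc 0 1 := fun i _ => by
    rcases hα i with h | h <;> simp [h]
  have hT := abs_sum_mul_sub_half_sum_le (Icc 1 m) α (ψ ^ ·) hunit
  have habs : |ψ| = -ψ := abs_of_neg goldenConj_neg
  have habs_sq : |ψ| ^ 2 + |ψ| = 1 := by rw [sq_abs, goldenConj_sq, habs]; ring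
  have hφ : 1 + |ψ| = φ := by rw [habs, ← one_sub_goldenRatio]; ring
  simp only [abs_pow, sum_Icc_pow_eq_of_sq_eq_add_one goldenConj_sq,
    sum_Icc_pow_eq_of_sq_add_self_eq_one habs_sq, hφ] at hT
  have key := abs_goldenConj_pow_sub_two_mul_lt m
  rw [abs_le] at hT
  rw [abs_lt] at key
  rw [hlamBar, hlam, Nat.add_sub_cancel]
  constructor <;> linarith [one_sub_goldenConj, goldenConj_sq]
end

section
/- In the Lie algebra of derivations of the polynomial ring R = K[t₀, t₁, t₂, …] over a field K, define special derivations v_i = ∂_i + t_{i−1} v_{i+1} (i ≥ 1), i.e. v_i = ∂_i + t_{i−1}∂_{i+1} + t_{i−1}t_i ∂_{i+2} + ⋯ . Then [v_i, v_{i+1}] = v_{i+2} for all i ≥ 1. -/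
open MvPolynomial

private lemma td_X_mul_lb {K : Type*} [Field K] (a : ℕ) {p : MvPolynomial ℕ K}
    (hp : p ≠ 0) : p.totalDegree + 1 ≤ (X a * p).totalDegree := by
  obtain ⟨d, hd, hsup⟩ := p.support.exists_mem_eq_sup
    (MvPolynomial.support_nonempty.mpr hp) (fun s => s.sum fun _ e => e)
  have hmem : (Finsupp.single a 1 + d) ∈ (X a * p).support := by
    rw [MvPolynomial.mem_support_iff, coeff_X_mul]
    exact MvPolynomial.mem_support_iff.mp hd
  have := le_totalDegree hmem
  rw [Finsupp.sum_add_index (by simp) (by intros; rfl)] at this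
  simp only [Finsupp.sum_single_index] at this
  have hdeg : p.totalDegree = d.sum fun _ e => e := by
    rw [totalDegree, hsup]
  omega

private lemma vzero_aux {K : Type*} [Field K]
    (v : ℕ → Derivation K (MvPolynomial ℕ K) (MvPolynomial ℕ K))
    (hv : ∀ i, 1 ≤ i → ∀ j : ℕ,
      v i (X j) = (if i = j then 1 else 0) + X (i - 1) * v (i + 1) (X j)) :
    ∀ n k j, j < k → 1 ≤ k → (v k (X j)).totalDegree < n → v k (X j) = 0 := by
  intro n
  induction n with
  | zero => intro k j _ _ h; omega
  | succ n ih =>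
    intro k j hjk hk hdeg
    have hrec : v k (X j) = X (k - 1) * v (k + 1) (X j) := by
      rw [hv k hk j, if_neg (by omega), zero_add]
    by_cases h0 : v (k + 1) (X j) = 0
    · rw [hrec, h0, mul_zero]
    · exfalso
      have := td_X_mul_lb (K := K) (k - 1) h0
      rw [← hrec] at this
      have h2 : (v (k + 1) (X j)).totalDegree < n := by omega
      exact h0 (ih (k + 1) j (by omega) (by omega) h2)

private lemma vzero {K : Type*} [Field K]
    (v : ℕ → Derivation K (MvPolynomial ℕ K) (MvPolynomial ℕ K))
    (hv : ∀ i, 1 ≤ i → ∀ j : ℕ,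
      v i (X j) = (if i = j then 1 else 0) + X (i - 1) * v (i + 1) (X j)) :
    ∀ k j, j < k → 1 ≤ k → v k (X j) = 0 := fun k j hjk hk =>
  vzero_aux v hv ((v k (X j)).totalDegree + 1) k j hjk hk (Nat.lt_succ_self _)

private lemma vdiag {K : Type*} [Field K]
    (v : ℕ → Derivation K (MvPolynomial ℕ K) (MvPolynomial ℕ K))
    (hv : ∀ i, 1 ≤ i → ∀ j : ℕ,
      v i (X j) = (if i = j then 1 else 0) + X (i - 1) * v (i + 1) (X j)) :
    ∀ k, 1 ≤ k → v k (X k) = 1 := by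
  intro k hk
  rw [hv k hk k, if_pos rfl, vzero v hv (k + 1) k (by omega) (by omega), mul_zero, add_zero]

/-- A derivation acting like `∂_i` kills `v k (X j)` when `i + 2 ≤ k`. -/
private lemma vpd {K : Type*} [Field K]
    (v : ℕ → Derivation K (MvPolynomial ℕ K) (MvPolynomial ℕ K))
    (hv : ∀ i, 1 ≤ i → ∀ j : ℕ,
      v i (X j) = (if i = j then 1 else 0) + X (i - 1) * v (i + 1) (X j))
    (i : ℕ) (D : Derivation K (MvPolynomial ℕ K) (MvPolynomial ℕ K))
    (hD : ∀ m, D (X m) = if i = m then 1 else 0) :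
    ∀ n k j, j < k + n → i + 2 ≤ k → D (v k (X j)) = 0 := by
  intro n
  induction n with
  | zero => intro k j h hik; rw [vzero v hv k j (by omega) (by omega), map_zero]
  | succ n ih =>
    intro k j hj hik
    rcases lt_trichotomy j k with h | h | h
    · rw [vzero v hv k j h (by omega), map_zero]
    · subst h
      rw [vdiag v hv j (by omega)]
      exact D.map_one_eq_zero
    · have hrec : v k (X j) = X (k - 1) * v (k + 1) (X j) := by
        rw [hv k (by omega) j, if_neg (by omega), zero_add]
      rw [hrec, D.leibniz, hD (k - 1), if_neg (by omega),
        ih (k + 1) j (by omega) (by omega)]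
      simp

/-- In `Der K[t₀,t₁,…]`, the pivot special derivations `v_i = ∂_i + t_{i−1} v_{i+1}`
(characterized by their action on the variables: `v i (t j) = ∂_i(t_j) + t_{i−1}·v_{i+1}(t_j)`)
satisfy `[v_i, v_{i+1}] = v_{i+2}` for all `i ≥ 1`. -/
theorem pivot_bracket_neighbours (K : Type*) [Field K]
    (v : ℕ → Derivation K (MvPolynomial ℕ K) (MvPolynomial ℕ K))
    (hv : ∀ i, 1 ≤ i → ∀ j : ℕ,
      v i (X j) = (if i = j then 1 else 0) + X (i - 1) * v (i + 1) (X j)) :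
    ∀ i, 1 ≤ i → ⁅v i, v (i + 1)⁆ = v (i + 2) := by
  intro i hi
  apply MvPolynomial.derivation_ext
  intro j
  rw [Derivation.commutator_apply]
  -- the "partial derivative" part of v i
  set D : Derivation K (MvPolynomial ℕ K) (MvPolynomial ℕ K) :=
    v i - (X (i - 1) : MvPolynomial ℕ K) • v (i + 1) with hDdef
  have hD : ∀ m, D (X m) = if i = m then 1 else 0 := by
    intro m
    rw [hDdef]
    simp only [Derivation.sub_apply, Derivation.smul_apply, smul_eq_mul]
    rw [hv i hi m]
    ring
  have hsplit : ∀ p, v i p = D p + X (i - 1) * v (i + 1) p := by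
    intro p
    rw [hDdef]
    simp only [Derivation.sub_apply, Derivation.smul_apply, smul_eq_mul]
    ring
  have hvi2 : v (i + 1) (X i) = 0 := vzero v hv (i + 1) i (by omega) (by omega)
  have hvii : v i (X i) = 1 := vdiag v hv i hi
  have hvi1 : v (i + 1) (X (i - 1)) = 0 := vzero v hv (i + 1) (i - 1) (by omega) (by omega)
  have hDw : D (v (i + 2) (X j)) = 0 := vpd v hv i D hD (j + 1) (i + 2) j (by omega) le_rfl
  -- expand v (i+1) (X j) and v i (X j)
  have h1 : v (i + 1) (X j) = (if i + 1 = j then 1 else 0) + X i * v (i + 2) (X j) := by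
    rw [hv (i + 1) (by omega) j]; norm_num
  have h2 : v i (X j) = (if i = j then 1 else 0) + X (i - 1) * v (i + 1) (X j) := hv i hi j
  rw [h1, h2, map_add, map_add]
  have hconst : ∀ (w : Derivation K (MvPolynomial ℕ K) (MvPolynomial ℕ K)) (a b : ℕ),
      w ((if a = b then 1 else 0 : MvPolynomial ℕ K)) = 0 := by
    intro w a b
    split <;> simp
  rw [hconst, hconst, zero_add, zero_add]
  rw [Derivation.leibniz, Derivation.leibniz]
  simp only [smul_eq_mul]
  rw [hvii, hvi1, h1, map_add, hconst, zero_add, Derivation.leibniz]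
  simp only [smul_eq_mul]
  rw [hvi2]
  rw [hsplit (v (i + 2) (X j)), hDw]
  ring_nf
  -- remaining goal: v (i+2) (X j) = ... hopefully closed; if not handle below
end

section
/- With pivot derivations v_i as above, for all 1 ≤ i < j one has [v_i, v_j] = t_{i−1} t_i ⋯ t_{j−3} v_{j+1}, where the product of t's is interpreted as 1 when i − 1 > j − 3. -/
/-!
On generators, the defining relation says `v i = ∂ i + t_{i-1} • v (i+1)` as derivations. Unrolling
the relation makes `v j (t_n)` for `n < j`, and `∂ i (v j (t_n))` for `j ≥ i + 2`, divisible by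
`t_k` for all large `k`, so both vanish. Hence `[v i, v (i+1)] = [∂ i, v (i+1)] = v (i+2)` and
`[v i, v j] = t_{i-1} • [v (i+1), v j]` for `j ≥ i + 2`; induction on `j - i` gives the product.
-/

open MvPolynomial

namespace MvPolynomial

variable {σ R : Type*} [CommSemiring R]

theorem eq_zero_of_X_dvd_of_notMem_vars {p : MvPolynomial σ R} {k : σ} (hk : k ∉ p.vars)
    (h : X k ∣ p) : p = 0 := by
  obtain ⟨q, rfl⟩ := h
  by_contra hp
  have hq : q ≠ 0 := by rintro rfl; simp at hp
  rw [mem_vars_iff_degreeOf_ne_zero, mul_comm,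
    (degreeOf_mul_X_eq_degreeOf_add_one_iff k q).mpr hq] at hk
  exact hk (Nat.succ_ne_zero _)

theorem eq_zero_of_eq_X_mul_succ {f : ℕ → MvPolynomial ℕ R} {j₀ : ℕ}
    (hf : ∀ j, j₀ ≤ j → f j = X j * f (j + 1)) {j : ℕ} (hj : j₀ ≤ j) : f j = 0 := by
  -- `f j` is divisible by every `X (j + m)` but involves only finitely many variables.
  have hdvd : ∀ m, X (j + m) ∣ f j := by
    intro m
    induction m generalizing j with
    | zero => exact ⟨_, hf j hj⟩
    | succ m ih =>
      rw [hf j hj, ← add_comm 1, ← add_assoc, add_comm j 1]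
      exact (ih (by omega)).mul_left _
  obtain ⟨k, hk⟩ := Infinite.exists_notMem_finset ((f j).vars ∪ Finset.range j)
  rw [Finset.mem_union, not_or, Finset.mem_range, not_lt] at hk
  obtain ⟨m, rfl⟩ := Nat.exists_eq_add_of_le hk.2
  exact eq_zero_of_X_dvd_of_notMem_vars hk.1 (hdvd m)

end MvPolynomial

namespace Derivation

variable {R A : Type*} [CommRing R] [CommRing A] [Algebra R A]

theorem lie_smul_left (a : A) (D E : Derivation R A A) : ⁅a • D, E⁆ = a • ⁅D, E⁆ - E a • D := by
  ext b
  simp only [commutator_apply, sub_apply, smul_apply, smul_eq_mul, leibniz]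
  ring

end Derivation

namespace MvPolynomial

variable {σ R : Type*} [CommRing R]

theorem lie_pderiv_apply_X (D : Derivation R (MvPolynomial σ R) (MvPolynomial σ R)) (i n : σ) :
    ⁅pderiv (R := R) i, D⁆ (X n) = pderiv i (D (X n)) := by
  classical
  rw [Derivation.commutator_apply, pderiv_X]
  by_cases h : i = n
  · simp [h]
  · simp [Ne.symm h]

end MvPolynomial

section Pivot

variable {R : Type*} [CommRing R] {v : ℕ → Derivation R (MvPolynomial ℕ R) (MvPolynomial ℕ R)}
  (hv : ∀ i, 1 ≤ i → ∀ j : ℕ,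
    v i (X j) = (if i = j then 1 else 0) + X (i - 1) * v (i + 1) (X j))
include hv

theorem pivot_apply_X_of_lt {j n : ℕ} (hn : n < j) : v j (X n) = 0 := by
  have h := eq_zero_of_eq_X_mul_succ (f := fun k => v (k + 1) (X n)) (j₀ := n)
    (fun k hk => by simpa [if_neg (show k + 1 ≠ n by omega)] using hv (k + 1) (by omega) n)
    (j := j - 1) (by omega)
  rwa [Nat.sub_add_cancel (by omega)] at h

theorem pderiv_pivot_apply_X {i j : ℕ} (hij : i + 2 ≤ j) (n : ℕ) :
    pderiv i (v j (X n)) = 0 := by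
  have h := eq_zero_of_eq_X_mul_succ (f := fun k => pderiv i (v (k + 1) (X n))) (j₀ := i + 1)
    (fun k hk => by
      rw [hv (k + 1) (by omega) n, map_add, Derivation.leibniz, pderiv_X_of_ne (by omega)]
      split_ifs <;> simp)
    (j := j - 1) (by omega)
  rwa [Nat.sub_add_cancel (by omega)] at h

theorem pivot_eq_pderiv_add {i : ℕ} (hi : 1 ≤ i) :
    v i = pderiv i + (X (i - 1) : MvPolynomial ℕ R) • v (i + 1) := by
  refine derivation_ext fun n => ?_
  rw [hv i hi n, Derivation.add_apply, Derivation.smul_apply, smul_eq_mul, pderiv_X]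
  by_cases h : i = n
  · simp [h]
  · simp [h, Ne.symm h]

theorem lie_pderiv_pivot_succ {i : ℕ} (hi : 1 ≤ i) :
    ⁅pderiv (R := R) i, v (i + 1)⁆ = v (i + 2) := by
  refine derivation_ext fun n => ?_
  rw [lie_pderiv_apply_X, hv (i + 1) (by omega) n, map_add, Derivation.leibniz,
    Nat.add_sub_cancel, pderiv_X_self, pderiv_pivot_apply_X hv le_rfl]
  split_ifs <;> simp

theorem lie_pderiv_pivot_of_add_two_le {i j : ℕ} (hij : i + 2 ≤ j) :
    ⁅pderiv (R := R) i, v j⁆ = 0 :=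
  derivation_ext fun n => by
    rw [lie_pderiv_apply_X, pderiv_pivot_apply_X hv hij, Derivation.zero_apply]

theorem lie_pivot_succ {i : ℕ} (hi : 1 ≤ i) : ⁅v i, v (i + 1)⁆ = v (i + 2) := by
  have h := add_lie (pderiv (R := R) i) ((X (i - 1) : MvPolynomial ℕ R) • v (i + 1)) (v (i + 1))
  rw [← pivot_eq_pderiv_add hv hi] at h
  rw [h, lie_pderiv_pivot_succ hv hi, Derivation.lie_smul_left, pivot_apply_X_of_lt hv (by omega)]
  simp

theorem lie_pivot_of_add_two_le {i j : ℕ} (hi : 1 ≤ i) (hij : i + 2 ≤ j) :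
    ⁅v i, v j⁆ = (X (i - 1) : MvPolynomial ℕ R) • ⁅v (i + 1), v j⁆ := by
  have h := add_lie (pderiv (R := R) i) ((X (i - 1) : MvPolynomial ℕ R) • v (i + 1)) (v j)
  rw [← pivot_eq_pderiv_add hv hi] at h
  rw [h, lie_pderiv_pivot_of_add_two_le hv hij, Derivation.lie_smul_left,
    pivot_apply_X_of_lt hv (by omega)]
  simp

end Pivot

/-- In `Der K[t₀,t₁,…]`, the pivot special derivations `v_i = ∂_i + t_{i−1} v_{i+1}`
satisfy `[v_i, v_j] = t_{i−1} t_i ⋯ t_{j−3} v_{j+1}` for all `1 ≤ i < j`,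
the product of `t`'s being `1` when `i − 1 > j − 3`. -/
theorem pivot_bracket_general (K : Type*) [Field K]
    (v : ℕ → Derivation K (MvPolynomial ℕ K) (MvPolynomial ℕ K))
    (hv : ∀ i, 1 ≤ i → ∀ j : ℕ,
      v i (X j) = (if i = j then 1 else 0) + X (i - 1) * v (i + 1) (X j)) :
    ∀ i j : ℕ, 1 ≤ i → i < j →
      ⁅v i, v j⁆ = ((∏ k ∈ Finset.Ico (i - 1) (j - 2), X k : MvPolynomial ℕ K)) • v (j + 1) := by
  intro i j hi hij
  obtain ⟨d, rfl⟩ := Nat.exists_eq_add_of_lt hij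
  induction d generalizing i with
  | zero =>
    rw [lie_pivot_succ hv hi, show i + 0 + 1 - 2 = i - 1 by omega, Finset.Ico_self,
      Finset.prod_empty, one_smul]
  | succ d ih =>
    rw [lie_pivot_of_add_two_le hv hi (by omega), show i + (d + 1) + 1 = i + 1 + d + 1 by omega,
      ih (i + 1) (by omega) (by omega), smul_smul,
      Finset.prod_eq_prod_Ico_succ_bot (by omega : i - 1 < i + 1 + d + 1 - 2),
      Nat.sub_add_cancel hi, Nat.add_sub_cancel]
end

section
/- Let K be a field of characteristic 2, R = K[tᵢ : i ≥ 0]/(tᵢ² : i ≥ 0) the truncated polynomial ring, and v_i = ∂_i + t_{i−1} v_{i+1} the pivot derivations of R. Then v_i² = t_{i−1} v_{i+2} as an operator on R, for all i ≥ 1. -/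
/-- Over a field of characteristic `2`, in the truncated polynomial ring
`R = K[t₀,t₁,…]/(tᵢ²)` (an `R` generated by elements `t i` with `t i ^ 2 = 0`,
with partial derivations `d i` and pivot derivations `v i = d i + t (i−1) • v (i+1)`),
one has `v_i² = t_{i−1} v_{i+2}` as an operator on `R`, for all `i ≥ 1`. -/
theorem pivot_square (K : Type*) [Field K] [CharP K 2]
    (R : Type*) [CommRing R] [Algebra K R] [CharP R 2]
    (t : ℕ → R) (htsq : ∀ i, t i ^ 2 = 0)
    (htgen : Algebra.adjoin K (Set.range t) = ⊤)
    (d v : ℕ → Derivation K R R)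
    (hd : ∀ i j : ℕ, d i (t j) = if i = j then 1 else 0)
    (hdd : ∀ i : ℕ, ∀ x : R, d i (d i x) = 0)
    (hvt : ∀ n j : ℕ, j < n → v n (t j) = 0)
    (hrec : ∀ i, 1 ≤ i → v i = d i + t (i - 1) • v (i + 1)) :
    ∀ i, 1 ≤ i → ∀ x : R, v i (v i x) = t (i - 1) * v (i + 2) x := by
  have hdt0 : ∀ i j : ℕ, i ≠ j → d i (t j) = 0 := by
    intro i j h; rw [hd]; simp [h]
  have hdt1 : ∀ i : ℕ, d i (t i) = 1 := by
    intro i; rw [hd]; simp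
  -- d i kills values of d n on generators (they are constants 0 or 1)
  have hdc : ∀ i n j : ℕ, d i (d n (t j)) = 0 := by
    intro i n j; rw [hd n j]; split <;>
      simp [Derivation.map_one_eq_zero]
  -- key: d i (v n (t j)) = 0 whenever i + 1 < n
  have L1 : ∀ (m i n j : ℕ), i + 1 < n → j < n + m → d i (v n (t j)) = 0 := by
    intro m
    induction m with
    | zero =>
      intro i n j hin hj
      rw [hvt n j (by omega), map_zero]
    | succ m ih =>
      intro i n j hin hj
      by_cases hjn : j < n
      · rw [hvt n j hjn, map_zero]
      · rw [hrec n (by omega)]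
        simp only [Derivation.add_apply, Derivation.smul_apply, smul_eq_mul, map_add]
        rw [hdc, Derivation.leibniz, smul_eq_mul, smul_eq_mul,
          hdt0 i (n - 1) (by omega), ih i (n + 1) j (by omega) (by omega)]
        ring
  -- the partial derivations commute
  have Ldd : ∀ a b : ℕ, ∀ x : R, d a (d b x) = d b (d a x) := by
    intro a b
    have h0 : ⁅d a, d b⁆ = (0 : Derivation K R R) := by
      apply Derivation.ext_of_adjoin_eq_top _ htgen
      rintro _ ⟨j, rfl⟩
      rw [Derivation.commutator_apply, hdc, hdc]
      simp
    intro x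
    have h : ⁅d a, d b⁆ x = (0 : Derivation K R R) x := by rw [h0]
    rw [Derivation.commutator_apply, Derivation.zero_apply, sub_eq_zero] at h
    exact h
  -- d i commutes with v n when i + 1 < n
  have Ldv : ∀ i n : ℕ, i + 1 < n → ∀ x : R, d i (v n x) = v n (d i x) := by
    intro i n hin
    have h0 : ⁅d i, v n⁆ = (0 : Derivation K R R) := by
      apply Derivation.ext_of_adjoin_eq_top _ htgen
      rintro _ ⟨j, rfl⟩
      rw [Derivation.commutator_apply, L1 (j + 1) i n j hin (by omega), hd i j]
      split <;> simp [Derivation.map_one_eq_zero]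
    intro x
    have h : ⁅d i, v n⁆ x = (0 : Derivation K R R) x := by rw [h0]
    rw [Derivation.commutator_apply, Derivation.zero_apply, sub_eq_zero] at h
    exact h
  have h2 : (2 : R) = 0 := CharTwo.two_eq_zero
  intro i hi x
  obtain ⟨k, rfl⟩ : ∃ k, i = k + 1 := ⟨i - 1, (Nat.succ_pred_eq_of_pos hi).symm⟩
  simp only [Nat.add_sub_cancel]
  show v (k + 1) (v (k + 1) x) = t k * v (k + 3) x
  have hv1 : ∀ y : R, v (k + 1) y = d (k + 1) y + t k * v (k + 2) y := by
    intro y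
    rw [hrec (k + 1) (by omega)]
    simp [Nat.add_sub_cancel]
  have hv2 : ∀ y : R, v (k + 2) y = d (k + 2) y + t (k + 1) * v (k + 3) y := by
    intro y
    rw [hrec (k + 2) (by omega)]
    simp [Nat.add_sub_cancel, show k + 2 - 1 = k + 1 from rfl]
  have htk : t k * t k = 0 := by have := htsq k; rwa [pow_two] at this
  have e1 : v (k + 1) (v (k + 1) x)
      = t k * (v (k + 2) (d (k + 1) x) + d (k + 1) (v (k + 2) x))
        + t k * t k * (v (k + 2) (v (k + 2) x)) := by
    rw [hv1 x, map_add, hv1 (d (k + 1) x), hv1 (t k * v (k + 2) x), hdd,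
      Derivation.leibniz, Derivation.leibniz, smul_eq_mul, smul_eq_mul, smul_eq_mul,
      smul_eq_mul, hdt0 (k + 1) k (by omega), hvt (k + 2) k (by omega)]
    ring
  have e3 : v (k + 2) (d (k + 1) x) + d (k + 1) (v (k + 2) x) = v (k + 3) x := by
    rw [hv2 (d (k + 1) x), hv2 x, map_add, Derivation.leibniz, smul_eq_mul, smul_eq_mul,
      hdt1 (k + 1), Ldd (k + 2) (k + 1) x, Ldv (k + 1) (k + 3) (by omega) x]
    linear_combination (d (k + 1) (d (k + 2) x) + t (k + 1) * v (k + 3) (d (k + 1) x)) * h2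
  rw [e1, e3, htk]
  ring
end

section
/- Let λ = (1+√5)/2 and set n₀ = ⌊log_{2λ}(8x)⌋ for real x ≥ 1. Then λ^{n₀} · 2^{n₀ − 3} ≤ x, and exp(ln 2 · 2^{n₀ − 3}) ≥ exp(2^{−4} · 8^{log_{2λ} 2} · ln 2 · x^{θ}) where θ = log_{2λ} 2. -/
/-- `n₀ = ⌊log_{2λ}(8x)⌋` as a real number. -/
noncomputable def n0 (x : ℝ) : ℝ := (⌊Real.logb (2 * lam) (8 * x)⌋ : ℤ)

lemma lam_pos : (0 : ℝ) < lam := by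
  have : (1:ℝ) ≤ Real.sqrt 5 := by
    rw [show (1:ℝ) = Real.sqrt 1 by simp]
    exact Real.sqrt_le_sqrt (by norm_num)
  unfold lam; linarith

lemma one_lt_b : (1 : ℝ) < 2 * lam := by
  have h1 : (1:ℝ) ≤ Real.sqrt 5 := by
    rw [show (1:ℝ) = Real.sqrt 1 by simp]
    exact Real.sqrt_le_sqrt (by norm_num)
  unfold lam; linarith

lemma b_pos : (0 : ℝ) < 2 * lam := lt_trans one_pos one_lt_b

lemma aux_rpow (y : ℝ) (hy : 0 < y) :
    (2 : ℝ) ^ Real.logb (2 * lam) y = y ^ Real.logb (2 * lam) 2 := by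
  rw [Real.rpow_def_of_pos (by norm_num : (0:ℝ) < 2), Real.rpow_def_of_pos hy,
    Real.logb, Real.logb]
  ring_nf

/-- Key estimate for the lower bound on the intermediate growth of `U(L)`:
with `n₀ = ⌊log_{2λ}(8x)⌋` one has `λ^{n₀} 2^{n₀−3} ≤ x` and
`exp(ln 2 · 2^{n₀−3}) ≥ exp(2^{−4}·8^{log_{2λ}2}·ln 2·x^θ)`, `θ = log_{2λ} 2`. -/
theorem enveloping_growth_lower_estimate (x : ℝ) (hx : 1 ≤ x) :
    lam ^ n0 x * (2 : ℝ) ^ (n0 x - 3) ≤ x ∧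
    Real.exp ((2 : ℝ) ^ (-4 : ℝ) * (8 : ℝ) ^ Real.logb (2 * lam) 2 * Real.log 2 *
        x ^ Real.logb (2 * lam) 2) ≤
      Real.exp (Real.log 2 * (2 : ℝ) ^ (n0 x - 3)) := by
  have hx8 : (0 : ℝ) < 8 * x := by linarith
  set L := Real.logb (2 * lam) (8 * x) with hL
  have hfloor_le : (n0 x : ℝ) ≤ L := by
    simpa [n0] using Int.floor_le L
  have hfloor_gt : L - 1 < n0 x := by
    exact Int.sub_one_lt_floor L
  constructor
  · have hmul : lam ^ n0 x * (2 : ℝ) ^ (n0 x - 3)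
        = (2 * lam) ^ n0 x * (2 : ℝ) ^ (-3 : ℝ) := by
      rw [Real.mul_rpow (by norm_num) lam_pos.le,
        show n0 x - 3 = n0 x + (-3) by ring,
        Real.rpow_add (by norm_num : (0:ℝ) < 2)]
      ring
    rw [hmul]
    have h1 : (2 * lam) ^ n0 x ≤ (2 * lam) ^ L :=
      Real.rpow_le_rpow_of_exponent_le one_lt_b.le hfloor_le
    have h2 : (2 * lam) ^ L = 8 * x := Real.rpow_logb b_pos (ne_of_gt one_lt_b) hx8
    have h3 : (2 : ℝ) ^ (-3 : ℝ) = 1 / 8 := by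
      rw [Real.rpow_neg (by norm_num), show (3:ℝ) = ((3:ℕ):ℝ) by norm_num,
        Real.rpow_natCast]
      norm_num
    calc (2 * lam) ^ n0 x * (2 : ℝ) ^ (-3 : ℝ)
        ≤ (8 * x) * (2 : ℝ) ^ (-3 : ℝ) := by
          apply mul_le_mul_of_nonneg_right (h2 ▸ h1)
          positivity
      _ = x := by rw [h3]; ring
  · apply Real.exp_le_exp.mpr
    have key : (8 : ℝ) ^ Real.logb (2 * lam) 2 * x ^ Real.logb (2 * lam) 2
        = (2 : ℝ) ^ L := by
      rw [← Real.mul_rpow (by norm_num) (by linarith : (0:ℝ) ≤ x), ← aux_rpow (8 * x) hx8]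
    have h4 : L - 4 ≤ n0 x - 3 := by linarith
    have h5 : (2 : ℝ) ^ (L - 4) ≤ (2 : ℝ) ^ (n0 x - 3) :=
      Real.rpow_le_rpow_of_exponent_le (by norm_num) h4
    calc (2 : ℝ) ^ (-4 : ℝ) * (8 : ℝ) ^ Real.logb (2 * lam) 2 * Real.log 2 *
        x ^ Real.logb (2 * lam) 2
        = Real.log 2 * ((2 : ℝ) ^ (-4 : ℝ) *
            ((8 : ℝ) ^ Real.logb (2 * lam) 2 * x ^ Real.logb (2 * lam) 2)) := by ring
      _ = Real.log 2 * (2 : ℝ) ^ (L - 4) := by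
            rw [key, ← Real.rpow_add (by norm_num : (0:ℝ) < 2),
              show (-4 : ℝ) + L = L - 4 by ring]
      _ ≤ Real.log 2 * (2 : ℝ) ^ (n0 x - 3) :=
            mul_le_mul_of_nonneg_left h5 (Real.log_nonneg (by norm_num))
end
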